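/- arXiv:2603.11958 — 3 statements merged into one kernel-verified Lean document; each statement's English description precedes it below -/
import Mathlib

section
/- For the complete binary tree of depth k, the y-set-diameter equals 2k for all 1 ≤ y ≤ 2^{k−1}. -/
/-- Vertices of the complete binary tree of depth `k`: binary strings of length at most `k`
(the root is the empty string, the leaves the strings of length `k`). -/
def BTVertex (k : ℕ) := {l : List Bool // l.length ≤ k}

/-- The complete binary tree of depth `k`: a vertex is adjacent to its parent, obtained by
removing the first letter of its (nonempty) string. -/
def binTree (k : ℕ) : SimpleGraph (BTVertex k) where
  Adj x y := (∃ b, x.1 = b :: y.1) ∨ (∃ b, y.1 = b :: x.1)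
  symm := ⟨by rintro x y (⟨b, h⟩ | ⟨b, h⟩) <;> [right; left] <;> exact ⟨b, h⟩⟩
  loopless := ⟨by rintro x (⟨b, h⟩ | ⟨b, h⟩) <;> simpa using congrArg List.length h⟩

/-- The distance from a vertex `v` to a set `S` of vertices: the minimum graph distance
from `v` to a member of `S`. -/
noncomputable def distToSet {V : Type*} (G : SimpleGraph V) (v : V) (S : Finset V) : ℕ :=
  sInf {d | ∃ s ∈ S, G.dist v s = d}

namespace BTAux

instance {k : ℕ} : DecidableEq (BTVertex k) := fun x y =>
  decidable_of_iff (x.1 = y.1) Subtype.ext_iff.symm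

variable {k : ℕ}

/-- The root. -/
def root (k : ℕ) : BTVertex k := ⟨[], Nat.zero_le k⟩

lemma adj_length {x y : BTVertex k} (h : (binTree k).Adj x y) :
    x.1.length = y.1.length + 1 ∨ y.1.length = x.1.length + 1 := by
  rcases h with ⟨b, h⟩ | ⟨b, h⟩
  · left; simpa using congrArg List.length h
  · right; simpa using congrArg List.length h

/-- Along a walk, lengths change by at most one per step. -/
lemma length_le_walk {x y : BTVertex k} (p : (binTree k).Walk x y) :
    x.1.length ≤ y.1.length + p.length := by
  induction p with
  | nil => simp
  | cons h p ih =>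
    rcases adj_length h with h' | h' <;> simp [SimpleGraph.Walk.length_cons] <;> omega

/-- Explicit walk from a vertex to the root. -/
def walkToRoot : (l : List Bool) → (h : l.length ≤ k) → (binTree k).Walk ⟨l, h⟩ (root k)
  | [], _ => SimpleGraph.Walk.nil
  | b :: t, h =>
    SimpleGraph.Walk.cons (Or.inl ⟨b, rfl⟩)
      (walkToRoot t (le_trans (Nat.le_succ t.length) h))

lemma walkToRoot_length : ∀ (l : List Bool) (h : l.length ≤ k),
    (walkToRoot l h).length = l.length
  | [], _ => rfl
  | b :: t, h => by
    rw [walkToRoot]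
    exact congrArg Nat.succ (walkToRoot_length t _)

lemma dist_le_two_k (x y : BTVertex k) : (binTree k).dist x y ≤ 2 * k := by
  obtain ⟨p, hlen⟩ : ∃ p : (binTree k).Walk x y, p.length = x.1.length + y.1.length := by
    refine ⟨((walkToRoot x.1 x.2).copy rfl rfl).append
      (((walkToRoot y.1 y.2).copy rfl rfl).reverse), ?_⟩
    refine (SimpleGraph.Walk.length_append _ _).trans ?_
    refine (congrArg₂ (· + ·) (SimpleGraph.Walk.length_copy _ _ _)
      ((SimpleGraph.Walk.length_reverse _).trans (SimpleGraph.Walk.length_copy _ _ _))).trans ?_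
    exact congrArg₂ (· + ·) (walkToRoot_length _ _) (walkToRoot_length _ _)
  have := SimpleGraph.dist_le p
  have hx := x.2
  have hy := y.2
  omega

lemma reachable (x y : BTVertex k) : (binTree k).Reachable x y :=
  (((walkToRoot x.1 x.2).copy rfl rfl).append
      (((walkToRoot y.1 y.2).copy rfl rfl).reverse)).reachable

lemma getLast?_adj {x y : BTVertex k} (h : (binTree k).Adj x y)
    (hx : x.1 ≠ []) (hy : y.1 ≠ []) : x.1.getLast? = y.1.getLast? := by
  rcases h with ⟨b, h⟩ | ⟨b, h⟩
  · rcases hl : y.1 with _ | ⟨c, t⟩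
    · exact absurd hl hy
    · rw [h, hl, List.getLast?_cons_cons]
  · rcases hl : x.1 with _ | ⟨c, t⟩
    · exact absurd hl hx
    · rw [h, hl, List.getLast?_cons_cons]

/-- A walk between vertices whose strings end in different letters must pass the root. -/
lemma root_mem_support {v s : BTVertex k} (p : (binTree k).Walk v s)
    (hv : v.1.getLast? = some false) (hs : s.1.getLast? = some true) :
    root k ∈ p.support := by
  induction p with
  | nil => rw [hv] at hs; simp at hs
  | @cons a b c h p ih =>
    by_cases hb : b.1 = []
    · have hbr : b = root k := Subtype.ext hb
      rw [SimpleGraph.Walk.support_cons]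
      exact List.mem_cons_of_mem _ (hbr ▸ p.start_mem_support)
    · have ha : a.1 ≠ [] := by
        intro h'; rw [List.getLast?_eq_none_iff.mpr h'] at hv; exact (Option.some_ne_none _ hv.symm)
      have := getLast?_adj h ha hb
      rw [SimpleGraph.Walk.support_cons]
      exact List.mem_cons_of_mem _ (ih (this ▸ hv) hs)

lemma dist_eq_two_k {v s : BTVertex k} (hvlen : v.1.length = k) (hslen : s.1.length = k)
    (hv : v.1.getLast? = some false) (hs : s.1.getLast? = some true) :
    (binTree k).dist v s = 2 * k := by
  refine le_antisymm (dist_le_two_k v s) ?_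
  obtain ⟨p, hp⟩ := (reachable v s).exists_walk_length_eq_dist
  rw [← hp]
  have hmem := root_mem_support p hv hs
  have hsplit := congrArg SimpleGraph.Walk.length (p.take_spec hmem)
  rw [SimpleGraph.Walk.length_append] at hsplit
  have h1 : v.1.length ≤ (p.takeUntil (root k) hmem).length := by
    simpa [root] using length_le_walk (p.takeUntil (root k) hmem)
  have h2 : s.1.length ≤ (p.dropUntil (root k) hmem).length := by
    have := length_le_walk (p.dropUntil (root k) hmem).reverse
    rw [SimpleGraph.Walk.length_reverse] at this
    simpa [root] using this
  omega

end BTAux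

/-- On the complete binary tree of depth `k`, the `y`-set-diameter equals `2k` for all
`1 ≤ y ≤ 2 ^ (k - 1)`. -/
theorem binTree_ySetDiameter {k y : ℕ} (hk : 1 ≤ k) (hy : 1 ≤ y) (hyk : y ≤ 2 ^ (k - 1)) :
    IsGreatest {d | ∃ (v : BTVertex k) (S : Finset (BTVertex k)), S.card = y ∧
      distToSet (binTree k) v S = d} (2 * k) := by
  constructor
  · -- membership: construct v and S
    refine ⟨⟨List.replicate k false, by simp⟩, ?_⟩
    set f : ℕ → BTVertex k := fun i =>
      ⟨(List.range (k - 1)).map i.testBit ++ [true], by simp; omega⟩ with hf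
    refine ⟨(Finset.range y).image f, ?_, ?_⟩
    · rw [Finset.card_image_of_injOn, Finset.card_range]
      intro i hi j hj hij
      simp only [Finset.coe_range, Set.mem_Iio] at hi hj
      have hlists : (List.range (k - 1)).map i.testBit = (List.range (k - 1)).map j.testBit :=
        List.append_cancel_right (congrArg Subtype.val hij)
      refine Nat.eq_of_testBit_eq fun n => ?_
      by_cases hn : n < k - 1
      · have := congrArg (fun l => l[n]?) hlists
        simpa [List.getElem?_map, List.getElem?_range, hn] using this
      · have hi2 : i < 2 ^ n := lt_of_lt_of_le (lt_of_lt_of_le hi hyk)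
          (Nat.pow_le_pow_right (by norm_num) (by omega))
        have hj2 : j < 2 ^ n := lt_of_lt_of_le (lt_of_lt_of_le hj hyk)
          (Nat.pow_le_pow_right (by norm_num) (by omega))
        rw [Nat.testBit_eq_false_of_lt hi2, Nat.testBit_eq_false_of_lt hj2]
    · -- distToSet = 2k
      have hvlast : (List.replicate k false).getLast? = some false := by
        obtain ⟨m, rfl⟩ : ∃ m, k = m + 1 := ⟨k - 1, by omega⟩
        rw [List.replicate_succ', List.getLast?_concat]
      have hdists : ∀ s ∈ (Finset.range y).image f,
          (binTree k).dist ⟨List.replicate k false, by simp⟩ s = 2 * k := by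
        intro s hs
        simp only [Finset.mem_image] at hs
        obtain ⟨i, _, rfl⟩ := hs
        refine BTAux.dist_eq_two_k (by simp) (by simp [hf]; omega) hvlast ?_
        exact List.getLast?_concat
      have h0 : f 0 ∈ (Finset.range y).image f :=
        Finset.mem_image_of_mem f (Finset.mem_range.mpr hy)
      refine le_antisymm (Nat.sInf_le ⟨f 0, h0, hdists _ h0⟩) ?_
      refine le_csInf ⟨2 * k, f 0, h0, hdists _ h0⟩ ?_
      rintro b ⟨s, hs, rfl⟩
      exact (hdists s hs).ge
  · -- upper bound
    rintro d ⟨v, S, hcard, rfl⟩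
    have hS : S.Nonempty := Finset.card_pos.mp (by omega)
    obtain ⟨s, hs⟩ := hS
    calc distToSet (binTree k) v S ≤ (binTree k).dist v s :=
          Nat.sInf_le ⟨s, hs, rfl⟩
      _ ≤ 2 * k := BTAux.dist_le_two_k v s
end

section
/- Let H be a graph with a cut-vertex v, let G₁ be a connected component of H − v, and set G = G₁ ∪ {v} (the induced subgraph on V(G₁) ∪ {v}). If BROADCAST(G,k) is an Adversary win, then BROADCAST(H,k) is an Adversary win. -/
namespace Broadcast

variable {V : Type*}

/-- In one time step, a token at `p` may remain or move along an edge of `H` to `q`. -/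
def Step (H : SimpleGraph V) (p q : V) : Prop := p = q ∨ H.Adj p q

/-- A legal choice for the adversary: a connected spanning subgraph of `G`. -/
def ValidSub (G H : SimpleGraph V) : Prop := H ≤ G ∧ H.Connected

/-- `Knows pos i₀ t a`: agent `a` is knowledgeable at time `t`, when agent `i₀` is
initially knowledgeable and `pos t` gives the agents' positions at time `t`. -/
def Knows {k : ℕ} (pos : ℕ → Fin k → V) (i₀ : Fin k) : ℕ → Fin k → Prop
  | 0 => fun a => a = i₀
  | (t+1) => fun a =>
      Knows pos i₀ t a ∨ ∃ b, Knows pos i₀ t b ∧ pos (t+1) a = pos (t+1) b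

/-- The history of agent positions up to and including time `t`. -/
def hist {k : ℕ} (pos : ℕ → Fin k → V) (t : ℕ) : List (Fin k → V) :=
  (List.range (t+1)).map pos

/-- A run `pos` is consistent with adversary strategy `strat` if at each time step every
agent stays or moves along an edge of the subgraph chosen by the adversary (which may
depend on the history of positions so far). -/
def Consistent {k : ℕ} (strat : List (Fin k → V) → SimpleGraph V)
    (pos : ℕ → Fin k → V) : Prop :=
  ∀ t a, Step (strat (hist pos t)) (pos t a) (pos (t+1) a)

/-- Adversary wins `BROADCAST(G,k)`: there is an initial placement of the `k` agents on
distinct vertices (agent `0` knowledgeable) and a strategy choosing a connected spanning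
subgraph each round, such that in every consistent run some agent never becomes
knowledgeable. -/
def AdversaryWin (G : SimpleGraph V) (k : ℕ) [NeZero k] : Prop :=
  ∃ (init : Fin k → V) (strat : List (Fin k → V) → SimpleGraph V),
    Function.Injective init ∧ (∀ h, ValidSub G (strat h)) ∧
    ∀ pos : ℕ → Fin k → V, pos 0 = init → Consistent strat pos →
      ∃ a, ∀ t, ¬ Knows pos 0 t a

/-- Agents win `BROADCAST(G,k)`: for every initial placement on distinct vertices and every
adversary strategy choosing connected spanning subgraphs, the agents have a consistent run
in which eventually all agents are knowledgeable. -/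
def AgentsWin (G : SimpleGraph V) (k : ℕ) [NeZero k] : Prop :=
  ∀ (init : Fin k → V) (strat : List (Fin k → V) → SimpleGraph V),
    Function.Injective init → (∀ h, ValidSub G (strat h)) →
    ∃ pos : ℕ → Fin k → V, pos 0 = init ∧ Consistent strat pos ∧
      ∃ T, ∀ a, Knows pos 0 T a

end Broadcast

open Broadcast

/-- Let `H` be a connected graph with a cut-vertex `v`, and let `C` be (the vertex set of)
a connected component of `H - v`.  If `BROADCAST(G, k)` is an Adversary win on the induced
subgraph `G` on `C ∪ {v}`, then `BROADCAST(H, k)` is an Adversary win. -/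
theorem adversaryWin_of_cut_vertex {V : Type*} {H : SimpleGraph V} (hH : H.Connected)
    (v : V) (hcut : ¬ (SimpleGraph.induce {x : V | x ≠ v} H).Connected)
    (C : Set V) (hvC : v ∉ C)
    (hCconn : (SimpleGraph.induce C H).Connected)
    (hCclosed : ∀ a ∈ C, ∀ b : V, H.Adj a b → b ∈ C ∪ {v})
    (k : ℕ) [NeZero k]
    (hadv : AdversaryWin (SimpleGraph.induce (C ∪ {v}) H) k) :
    AdversaryWin H k := by
  classical
  obtain ⟨init, strat, hinj, hvalid, hwin⟩ := hadv
  have hvS : v ∈ C ∪ {v} := Or.inr rfl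
  -- projection of vertices of `H` to vertices of `G`
  let π : V → (C ∪ {v} : Set V) := fun x => if h : x ∈ C ∪ {v} then ⟨x, h⟩ else ⟨v, hvS⟩
  have hπ : ∀ (x : (C ∪ {v} : Set V)), π (x : V) = x := by
    intro x
    simp only [π, dif_pos x.2]
  have hπv : ∀ r : V, r ∉ C → π r = ⟨v, hvS⟩ := by
    intro r hr
    by_cases hrS : r ∈ C ∪ {v}
    · have hrv : r = v := hrS.resolve_left hr
      subst hrv
      simp only [π, dif_pos hrS]
    · simp only [π, dif_neg hrS]
  -- lifting a subgraph of `G` to a subgraph of `H`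
  let lift : SimpleGraph (C ∪ {v} : Set V) → SimpleGraph V := fun G' =>
    { Adj := fun x y => (∃ hx : x ∈ C ∪ {v}, ∃ hy : y ∈ C ∪ {v}, G'.Adj ⟨x, hx⟩ ⟨y, hy⟩) ∨
        (H.Adj x y ∧ x ∉ C ∧ y ∉ C)
      symm := by
        constructor
        rintro x y (⟨hx, hy, h⟩ | ⟨h, hx, hy⟩)
        · exact Or.inl ⟨hy, hx, h.symm⟩
        · exact Or.inr ⟨h.symm, hy, hx⟩
      loopless := by
        constructor
        rintro x (⟨hx, hx', h⟩ | ⟨h, _, _⟩)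
        · exact G'.irrefl h
        · exact H.irrefl h }
  have hliftle : ∀ G' : SimpleGraph (C ∪ {v} : Set V),
      G' ≤ SimpleGraph.induce (C ∪ {v}) H → lift G' ≤ H := by
    rintro G' hle p q (⟨hp, hq, h⟩ | ⟨h, _, _⟩)
    · have := hle h
      rwa [SimpleGraph.comap_adj] at this
    · exact h
  have hliftconn : ∀ G' : SimpleGraph (C ∪ {v} : Set V),
      G' ≤ SimpleGraph.induce (C ∪ {v}) H → G'.Connected → (lift G').Connected := by
    intro G' hle hconn
    have key : ∀ (x z : V) (w : H.Walk x z), z = v → x ∉ C → (lift G').Reachable x v := by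
      intro x z w
      induction w with
      | nil => rintro rfl _; exact SimpleGraph.Reachable.refl _
      | @cons a b c h w ih =>
        rintro rfl hx
        by_cases hb : b ∈ C
        · rcases hCclosed b hb a h.symm with h1 | h2
          · exact absurd h1 hx
          · have h3 := Set.mem_singleton_iff.mp h2
            subst h3
            exact SimpleGraph.Reachable.refl _
        · exact (SimpleGraph.Adj.reachable (Or.inr ⟨h, hx, hb⟩)).trans (ih rfl hb)
    have reachS : ∀ x : V, x ∈ C ∪ {v} → (lift G').Reachable x v := by
      intro x hx
      have hr : G'.Reachable ⟨x, hx⟩ ⟨v, hvS⟩ := hconn ⟨x, hx⟩ ⟨v, hvS⟩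
      exact hr.map ⟨Subtype.val, fun {a b} h => Or.inl ⟨a.2, b.2, h⟩⟩
    haveI : Nonempty V := ⟨v⟩
    refine SimpleGraph.Connected.mk ?_
    intro x y
    have hxv : (lift G').Reachable x v := by
      by_cases hx : x ∈ C
      · exact reachS x (Or.inl hx)
      · exact key x v (hH x v).some rfl hx
    have hyv : (lift G').Reachable y v := by
      by_cases hy : y ∈ C
      · exact reachS y (Or.inl hy)
      · exact key y v (hH y v).some rfl hy
    exact hxv.trans hyv.symm
  have hstep : ∀ (G' : SimpleGraph (C ∪ {v} : Set V)) (p q : V),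
      Step (lift G') p q → Step G' (π p) (π q) := by
    rintro G' p q (rfl | (⟨hp, hq, h⟩ | ⟨_, hp, hq⟩))
    · exact Or.inl rfl
    · right
      rwa [show π p = ⟨p, hp⟩ from dif_pos hp, show π q = ⟨q, hq⟩ from dif_pos hq]
    · exact Or.inl (by rw [hπv p hp, hπv q hq])
  refine ⟨fun a => (init a : V), fun h => lift (strat (h.map (fun f => π ∘ f))),
    Subtype.val_injective.comp hinj, ?_, ?_⟩
  · intro h
    exact ⟨hliftle _ (hvalid _).1, hliftconn _ (hvalid _).1 (hvalid _).2⟩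
  · intro pos hpos0 hcons
    set pos' : ℕ → Fin k → (C ∪ {v} : Set V) := fun t a => π (pos t a) with hpos'def
    have hhist : ∀ t, hist pos' t = (hist pos t).map (fun f => π ∘ f) := by
      intro t
      simp only [hist, List.map_map]
      rfl
    have hpos0' : pos' 0 = init := by
      funext a
      simp only [pos', hpos0]
      exact hπ (init a)
    have hcons' : Consistent strat pos' := by
      intro t a
      show Step (strat (hist pos' t)) (pos' t a) (pos' (t+1) a)
      rw [hhist t]
      exact hstep _ _ _ (hcons t a)
    have hknows : ∀ t a, Knows pos 0 t a → Knows pos' 0 t a := by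
      intro t
      induction t with
      | zero => exact fun a h => h
      | succ t ih =>
        rintro a (h | ⟨b, hb, he⟩)
        · exact Or.inl (ih a h)
        · exact Or.inr ⟨b, ih b hb, by simp only [pos', he]⟩
    obtain ⟨a, ha⟩ := hwin pos' hpos0' hcons'
    exact ⟨a, fun t ht => ha t (hknows t a ht)⟩
end

section
/- If G is a graph obtained from a graph G₀ by attaching a path (identifying one endpoint of the path with a vertex of G₀), and BROADCAST(G₀,k) is an Agents win, then BROADCAST(G,k) is an Agents win. -/
open Broadcast

/-- The graph obtained from `G₀` by attaching a path with `m` further vertices at the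
vertex `u`: vertex `inr ⟨0, _⟩` is joined to `u`, and `inr i`, `inr j` are joined when
`|i - j| = 1`. -/
def attachPath {V : Type*} (G₀ : SimpleGraph V) (u : V) (m : ℕ) :
    SimpleGraph (V ⊕ Fin m) where
  Adj x y :=
    (∃ a b, x = Sum.inl a ∧ y = Sum.inl b ∧ G₀.Adj a b) ∨
    (∃ i : Fin m, ((x = Sum.inl u ∧ y = Sum.inr i) ∨ (y = Sum.inl u ∧ x = Sum.inr i)) ∧
      i.val = 0) ∨
    (∃ i j : Fin m, x = Sum.inr i ∧ y = Sum.inr j ∧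
      (i.val + 1 = j.val ∨ j.val + 1 = i.val))
  symm := by
    refine ⟨?_⟩
    rintro x y (⟨a, b, rfl, rfl, h⟩ | ⟨i, h1, h2⟩ | ⟨i, j, rfl, rfl, h⟩)
    · exact Or.inl ⟨b, a, rfl, rfl, h.symm⟩
    · exact Or.inr (Or.inl ⟨i, h1.symm, h2⟩)
    · exact Or.inr (Or.inr ⟨j, i, rfl, rfl, h.symm⟩)
  loopless := by
    refine ⟨?_⟩
    rintro x (⟨a, b, rfl, h1, h⟩ | ⟨i, (⟨h1, h2⟩ | ⟨h1, h2⟩), h3⟩ | ⟨i, j, rfl, h1, h⟩)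
    · exact G₀.irrefl (by cases h1; exact h)
    · exact absurd (h1 ▸ h2) (by simp)
    · exact absurd (h1 ▸ h2) (by simp)
    · cases h1; omega
section Aux
open Broadcast Classical

variable {α : Type*} {k : ℕ}

/-! ### basic Knows lemmas -/

lemma knows_mono [NeZero k] {pos : ℕ → Fin k → α} {t : ℕ} {a : Fin k} (h : Knows pos 0 t a) :
    Knows pos 0 (t+1) a := Or.inl h

lemma knows_le [NeZero k] {pos : ℕ → Fin k → α} {s t : ℕ} (hst : s ≤ t) {a : Fin k}
    (h : Knows pos 0 s a) : Knows pos 0 t a := by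
  induction t with
  | zero => exact (Nat.le_zero.mp hst) ▸ h
  | succ t ih =>
    rcases Nat.lt_or_ge s (t+1) with h' | h'
    · exact knows_mono (ih (Nat.lt_succ_iff.mp h'))
    · exact (Nat.le_antisymm hst h') ▸ h

lemma knows_zero [NeZero k] {pos : ℕ → Fin k → α} (t : ℕ) : Knows pos 0 t 0 := by
  induction t with
  | zero => rfl
  | succ t ih => exact Or.inl ih

lemma knows_homog [NeZero k] {pos : ℕ → Fin k → α} {t : ℕ} {a b : Fin k}
    (hab : pos (t+1) a = pos (t+1) b) (hb : Knows pos 0 (t+1) b) :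
    Knows pos 0 (t+1) a := by
  rcases hb with hb | ⟨c, hc, hbc⟩
  · exact Or.inr ⟨b, hb, hab⟩
  · exact Or.inr ⟨c, hc, hab.trans hbc⟩

/-! ### hist lemmas -/

lemma hist_succ (pos : ℕ → Fin k → α) (t : ℕ) :
    hist pos (t+1) = hist pos t ++ [pos (t+1)] := by
  unfold hist
  rw [List.range_succ, List.map_append, List.map_singleton]

lemma hist_zero (pos : ℕ → Fin k → α) : hist pos 0 = [pos 0] := by
  simp [hist, List.range_succ]

lemma hist_getLastD (pos : ℕ → Fin k → α) (t : ℕ) (d : Fin k → α) :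
    (hist pos t).getLastD d = pos t := by
  cases t with
  | zero => rw [hist_zero]; rfl
  | succ t => rw [hist_succ, List.getLastD_concat]

lemma hist_length (pos : ℕ → Fin k → α) (t : ℕ) : (hist pos t).length = t + 1 := by
  unfold hist; rw [List.length_map, List.length_range]

/-! ### run builder -/

/-- builds positions from a strategy `σ` mapping histories to next positions. -/
def runB (init : Fin k → α) (σ : List (Fin k → α) → (Fin k → α)) :
    ℕ → (Fin k → α) × List (Fin k → α)
  | 0 => (init, [init])
  | (t+1) =>
    let s := runB init σ t
    let f := σ s.2
    (f, s.2 ++ [f])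

/-- positions of the built run -/
def runP (init : Fin k → α) (σ : List (Fin k → α) → (Fin k → α)) (t : ℕ) : Fin k → α :=
  (runB init σ t).1

lemma runB_snd (init : Fin k → α) (σ : List (Fin k → α) → (Fin k → α)) (t : ℕ) :
    (runB init σ t).2 = hist (runP init σ) t := by
  induction t with
  | zero => rw [hist_zero]; rfl
  | succ t ih =>
    have h1 : runP init σ (t+1) = σ (runB init σ t).2 := rfl
    rw [hist_succ, h1, ← ih]
    rfl

lemma runP_zero (init : Fin k → α) (σ : List (Fin k → α) → (Fin k → α)) :
    runP init σ 0 = init := rfl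

lemma runP_succ (init : Fin k → α) (σ : List (Fin k → α) → (Fin k → α)) (t : ℕ) :
    runP init σ (t+1) = σ (hist (runP init σ) t) := by
  show (runB init σ (t+1)).1 = _
  rw [show (runB init σ (t+1)).1 = σ (runB init σ t).2 from rfl, runB_snd]

lemma runP_consistent (strat : List (Fin k → α) → SimpleGraph α)
    (init : Fin k → α) (σ : List (Fin k → α) → (Fin k → α))
    (hσ : ∀ l, ∀ a, Step (strat l) ((l.getLastD init) a) (σ l a)) :
    Consistent strat (runP init σ) := by
  intro t a
  rw [runP_succ]
  have := hσ (hist (runP init σ) t) a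
  rwa [hist_getLastD] at this

end Aux
section Graph
open Broadcast Classical SimpleGraph

variable {V : Type*} {G₀ : SimpleGraph V} {u : V} {m : ℕ}

/-- crossing edge along a walk -/
lemma walk_cross {α : Type*} {H : SimpleGraph α} (f : α → Prop) :
    ∀ {x y : α}, H.Walk x y → f x → ¬ f y → ∃ a b, H.Adj a b ∧ f a ∧ ¬ f b := by
  intro x y w
  induction w with
  | nil => intro hx hy; exact absurd hx hy
  | @cons x z y h p ih =>
    intro hx hy
    by_cases hz : f z
    · exact ih hz hy
    · exact ⟨x, z, h, hx, hz⟩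

variable {H : SimpleGraph (V ⊕ Fin m)}

lemma bridge0 (hH : ValidSub (attachPath G₀ u m) H) (i : Fin m) (hi : (i : ℕ) = 0) :
    H.Adj (Sum.inl u) (Sum.inr i) := by
  have hreach := hH.2.preconnected (Sum.inr i) (Sum.inl u)
  obtain ⟨a, b, hab, ⟨j, rfl⟩, hb⟩ :=
    walk_cross (fun x => ∃ j : Fin m, x = Sum.inr j) hreach.some ⟨i, rfl⟩ (by simp)
  rcases hH.1 hab with ⟨a', b', ha', _, _⟩ | ⟨i', h1, h2⟩ | ⟨i₁, j₁, _, hb', _⟩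
  · exact absurd ha' (by simp)
  · rcases h1 with ⟨ha', _⟩ | ⟨hb', ha'⟩
    · exact absurd ha' (by simp)
    · have hji : j = i := by
        apply Fin.ext
        have : j = i' := by simpa using ha'
        rw [this, h2, hi]
      subst hb'; rw [← hji]
      exact hab.symm
  · exact absurd ⟨j₁, hb'⟩ hb

lemma bridgeStep (hH : ValidSub (attachPath G₀ u m) H) (i j : Fin m)
    (hij : (j : ℕ) + 1 = (i : ℕ)) : H.Adj (Sum.inr i) (Sum.inr j) := by
  have hreach := hH.2.preconnected (Sum.inr i) (Sum.inl u)
  obtain ⟨a, b, hab, ⟨j₁, rfl, hj₁⟩, hb⟩ :=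
    walk_cross (fun x => ∃ j' : Fin m, x = Sum.inr j' ∧ (i : ℕ) ≤ (j' : ℕ))
      hreach.some ⟨i, rfl, le_refl _⟩ (by simp)
  rcases hH.1 hab with ⟨a', b', ha', _, _⟩ | ⟨i', h1, h2⟩ | ⟨i₁, j₂, ha', hb', hcons⟩
  · exact absurd ha' (by simp)
  · rcases h1 with ⟨ha', _⟩ | ⟨hb', ha'⟩
    · exact absurd ha' (by simp)
    · have : j₁ = i' := by simpa using ha'
      rw [this, h2] at hj₁
      omega
  · have hj₁i₁ : j₁ = i₁ := by simpa using ha'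
    subst hb'
    have hj₂ : ¬ ((i : ℕ) ≤ (j₂ : ℕ)) := fun h => hb ⟨j₂, rfl, h⟩
    have hi₁ : i₁ = i := by apply Fin.ext; omega
    have hj₂j : j₂ = j := by apply Fin.ext; omega
    rw [hj₁i₁, hi₁, hj₂j] at hab
    exact hab

/-- restriction of a subgraph of the attached graph to `V` -/
def restrictG (H : SimpleGraph (V ⊕ Fin m)) : SimpleGraph V where
  Adj a b := H.Adj (Sum.inl a) (Sum.inl b)
  symm := ⟨fun a b h => H.symm.symm _ _ h⟩
  loopless := ⟨fun a h => H.irrefl h⟩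

lemma restrictG_le (hH : ValidSub (attachPath G₀ u m) H) : restrictG H ≤ G₀ := by
  intro a b h
  rcases hH.1 h with ⟨a', b', ha', hb', hadj⟩ | ⟨i', h1, _⟩ | ⟨i₁, j₂, ha', _, _⟩
  · cases ha'; cases hb'; exact hadj
  · rcases h1 with ⟨_, hb'⟩ | ⟨_, ha'⟩
    · exact absurd hb' (by simp)
    · exact absurd ha' (by simp)
  · exact absurd ha' (by simp)

lemma restrictG_connected (hV : Nonempty V) (hH : ValidSub (attachPath G₀ u m) H) :
    (restrictG H).Connected := by
  rw [SimpleGraph.connected_iff]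
  refine ⟨?_, hV⟩
  have key : ∀ {x y : V ⊕ Fin m} (_ : H.Walk x y),
      (restrictG H).Reachable (Sum.elim id (fun _ => u) x) (Sum.elim id (fun _ => u) y) := by
    intro x y w
    induction w with
    | nil => exact Reachable.refl _
    | @cons x z y hadj p ih =>
      refine Reachable.trans ?_ ih
      rcases hH.1 hadj with ⟨a', b', ha', hb', hadj'⟩ | ⟨i', h1, _⟩ | ⟨i₁, j₂, ha', hb', _⟩
      · subst ha'; subst hb'
        exact SimpleGraph.Adj.reachable (show (restrictG H).Adj a' b' from hadj)
      · rcases h1 with ⟨ha', hb'⟩ | ⟨hb', ha'⟩ <;> (subst ha'; subst hb'; simp only [Sum.elim_inl, Sum.elim_inr, id]; exact Reachable.refl _)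
      · subst ha'; subst hb'; exact Reachable.refl _
  intro a b
  have := key (hH.2.preconnected (Sum.inl a) (Sum.inl b)).some
  simpa using this

lemma step_lift {l : SimpleGraph V} {H : SimpleGraph (V ⊕ Fin m)}
    (hl : l = restrictG H) {p q : V} (h : Step l p q) :
    Step H (Sum.inl p) (Sum.inl q) := by
  rcases h with h | h
  · exact Or.inl (by rw [h])
  · exact Or.inr (by rw [hl] at h; exact h)

end Graph
section Chain
open Broadcast Classical SimpleGraph

/-- the key one-round "chain shift" move along a simple path: one agent per vertex of the
path slides forward; the spare agent `s` at the start moves first. -/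
lemma chainShift {α : Type*} {H : SimpleGraph α} {S : α → Prop} {k : ℕ} :
    ∀ {x y : α} (w : H.Walk x y), w.IsPath → ∀ (P : Fin k → α) (s : Fin k),
    P s = x → ¬ S x → S y → (∀ z ∈ w.support, ¬ S z → ∃ a, P a = z) →
    ∃ (P' : Fin k → α) (b : Fin k),
      (∀ a, P' a = P a ∨ H.Adj (P a) (P' a)) ∧
      ¬ S (P b) ∧ S (P' b) ∧
      (∀ a, S (P a) → P' a = P a) ∧
      (∀ v, (∃ a, P a = v) → v ≠ x → ∃ a, P' a = v) ∧
      (∀ a, P' a ≠ P a → a = s ∨ P a ∈ w.support.tail) := by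
  intro x y w
  induction w with
  | nil =>
    intro _ P s _ hx hy _
    exact absurd hy hx
  | @cons x z y hadj w ih =>
    intro hp P s hs hx hy hocc
    rw [SimpleGraph.Walk.cons_isPath_iff] at hp
    by_cases hz : S z
    · refine ⟨Function.update P s z, s, ?_, ?_, ?_, ?_, ?_, ?_⟩
      · intro a
        by_cases has : a = s
        · subst has; right; rw [Function.update_self, hs]; exact hadj
        · left; rw [Function.update_of_ne has]
      · rw [hs]; exact hx
      · rw [Function.update_self]; exact hz
      · intro a ha
        have has : a ≠ s := fun h => hx (by rwa [h, hs] at ha)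
        rw [Function.update_of_ne has]
      · intro v ⟨a, ha⟩ hvx
        have has : a ≠ s := fun h => hvx (by rw [← ha, h, hs])
        exact ⟨a, by rw [Function.update_of_ne has, ha]⟩
      · intro a ha
        by_cases has : a = s
        · exact Or.inl has
        · rw [Function.update_of_ne has] at ha; exact absurd rfl ha
    · obtain ⟨c, hc⟩ := hocc z (by rw [Walk.support_cons]; exact List.mem_cons_of_mem _ w.start_mem_support) hz
      obtain ⟨P'', b, h1, h2, h3, h4, h5, h6⟩ :=
        ih hp.1 P c hc hz hy
          (fun z' hz' => hocc z' (by rw [Walk.support_cons]; exact List.mem_cons_of_mem _ hz'))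
      have hsc : s ≠ c := by
        intro h
        apply H.ne_of_adj hadj
        rw [← hs, h, hc]
      have hPs : P'' s = P s := by
        by_contra hne
        rcases h6 s hne with h | h
        · exact hsc h
        · rw [hs] at h
          exact hp.2 (List.mem_of_mem_tail h)
      have hbs : b ≠ s := by
        intro h
        rw [h, hPs, hs] at h3
        exact hx h3
      refine ⟨Function.update P'' s z, b, ?_, h2, ?_, ?_, ?_, ?_⟩
      · intro a
        by_cases has : a = s
        · subst has; right; rw [Function.update_self, hs]; exact hadj
        · rw [Function.update_of_ne has]; exact h1 a
      · rw [Function.update_of_ne hbs]; exact h3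
      · intro a ha
        have has : a ≠ s := fun h => hx (by rwa [h, hs] at ha)
        rw [Function.update_of_ne has]; exact h4 a ha
      · intro v hv hvx
        by_cases hvz : v = z
        · exact ⟨s, by rw [Function.update_self, hvz]⟩
        · obtain ⟨a, ha⟩ := h5 v hv hvz
          have has : a ≠ s := by
            intro h; rw [h, hPs, hs] at ha; exact hvx ha.symm
          exact ⟨a, by rw [Function.update_of_ne has, ha]⟩
      · intro a ha
        by_cases has : a = s
        · exact Or.inl has
        · rw [Function.update_of_ne has] at ha
          rcases h6 a ha with h | h
          · right
            rw [Walk.support_cons]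
            rw [h, hc]
            exact w.start_mem_support
          · right
            rw [Walk.support_cons]
            exact List.mem_of_mem_tail h
end Chain
section Moves
open Broadcast Classical SimpleGraph

variable {α : Type*} {k : ℕ}

/-- a legal one-round move for a team positioned by `Q` w.r.t. graph `H`. -/
def Legal (H : SimpleGraph α) (Q Q' : Fin k → α) : Prop :=
  ∀ a, Q' a = Q a ∨ H.Adj (Q a) (Q' a)

/-- the flood/separation spec: occupied set strictly grows. -/
def ShiftSpec (H : SimpleGraph α) (Q Q' : Fin k → α) : Prop :=
  Legal H Q Q' ∧ Set.range Q ⊆ Set.range Q' ∧ ¬ (Set.range Q' ⊆ Set.range Q)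

/-- the knowledge-spreading spec. -/
def SpreadSpec (H : SimpleGraph α) (Q Q' : Fin k → α) (κ : Fin k → Prop) : Prop :=
  Legal H Q Q' ∧ Set.range Q ⊆ Set.range Q' ∧
    ∃ b c : Fin k, ¬ κ b ∧ κ c ∧ Q' b = Q' c

lemma head_not_mem_tail {H : SimpleGraph α} {x y : α} (w : H.Walk x y) (hw : w.IsPath) :
    x ∉ w.support.tail := by
  have h1 := hw.support_nodup
  rw [w.support_eq_cons] at h1
  exact (List.nodup_cons.mp h1).1

lemma floodEx {H : SimpleGraph α} (hH : H.Connected) (Q : Fin k → α)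
    (a₁ a₂ : Fin k) (hne : a₁ ≠ a₂) (heq : Q a₁ = Q a₂)
    (v : α) (hv : v ∉ Set.range Q) : ∃ Q', ShiftSpec H Q Q' := by
  classical
  obtain ⟨w0⟩ := hH.preconnected (Q a₁) v
  set w := w0.toPath.1 with hw
  have hwp : w.IsPath := w0.toPath.2
  obtain ⟨P', b, h1, h2, h3, h4, h5, h6⟩ :=
    chainShift (S := fun z => z ∉ Set.range Q) w hwp Q a₂ heq.symm
      (not_not_intro ⟨a₁, rfl⟩) hv (fun z _ hz => not_not.mp hz)
  refine ⟨P', h1, ?_, ?_⟩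
  · rintro z ⟨a, rfl⟩
    by_cases hzx : Q a = Q a₁
    · have : P' a₁ = Q a₁ := by
        by_contra hmov
        rcases h6 a₁ hmov with h | h
        · exact hne h
        · exact head_not_mem_tail w hwp h
      exact ⟨a₁, by rw [this, hzx]⟩
    · obtain ⟨a', ha'⟩ := h5 (Q a) ⟨a, rfl⟩ hzx
      exact ⟨a', ha'⟩
  · intro hsub
    exact h3 (hsub ⟨b, rfl⟩)

lemma spreadEx {H : SimpleGraph α} (hH : H.Connected) (Q : Fin k → α)
    (hsurj : ∀ v, ∃ a, Q a = v) (κ : Fin k → Prop)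
    (hhom : ∀ a b, Q a = Q b → κ b → κ a)
    (c₀ : Fin k) (hc₀ : κ c₀) (a₀ : Fin k) (ha₀ : ¬ κ a₀)
    (a₁ a₂ : Fin k) (hne : a₁ ≠ a₂) (heq : Q a₁ = Q a₂) :
    ∃ Q', SpreadSpec H Q Q' κ := by
  classical
  by_cases hκ : κ a₁
  · -- the doubled vertex is knowledgeable: push a knower to an ignorant vertex
    obtain ⟨w0⟩ := hH.preconnected (Q a₁) (Q a₀)
    set w := w0.toPath.1 with hw
    have hwp : w.IsPath := w0.toPath.2
    have hx : ¬ (∃ a, ¬ κ a ∧ Q a = Q a₁) := by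
      rintro ⟨a, hna, ha⟩; exact hna (hhom a a₁ ha hκ)
    obtain ⟨P', b, h1, h2, h3, h4, h5, h6⟩ :=
      chainShift (S := fun z => ∃ a, ¬ κ a ∧ Q a = z) w hwp Q a₂ heq.symm
        hx ⟨a₀, ha₀, rfl⟩ (fun z hz hnz => hsurj z)
    have hrange : Set.range Q ⊆ Set.range P' := by
      rintro z ⟨a, rfl⟩
      by_cases hzx : Q a = Q a₁
      · have : P' a₁ = Q a₁ := by
          by_contra hmov
          rcases h6 a₁ hmov with h | h
          · exact hne h
          · exact head_not_mem_tail w hwp h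
        exact ⟨a₁, by rw [this, hzx]⟩
      · exact h5 (Q a) ⟨a, rfl⟩ hzx
    obtain ⟨a', hna', ha'⟩ := h3
    have hκb : κ b := by
      by_contra hnb
      exact h2 ⟨b, hnb, rfl⟩
    refine ⟨P', h1, hrange, a', b, hna', hκb, ?_⟩
    rw [h4 a' ⟨a', hna', rfl⟩, ha']
  · -- the doubled vertex is ignorant: push an ignorant agent to a knower's vertex
    obtain ⟨w0⟩ := hH.preconnected (Q a₁) (Q c₀)
    set w := w0.toPath.1 with hw
    have hwp : w.IsPath := w0.toPath.2
    have hx : ¬ (∃ a, κ a ∧ Q a = Q a₁) := by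
      rintro ⟨a, hka, ha⟩; exact hκ (hhom a₁ a ha.symm hka)
    obtain ⟨P', b, h1, h2, h3, h4, h5, h6⟩ :=
      chainShift (S := fun z => ∃ a, κ a ∧ Q a = z) w hwp Q a₂ heq.symm
        hx ⟨c₀, hc₀, rfl⟩ (fun z hz hnz => hsurj z)
    have hrange : Set.range Q ⊆ Set.range P' := by
      rintro z ⟨a, rfl⟩
      by_cases hzx : Q a = Q a₁
      · have : P' a₁ = Q a₁ := by
          by_contra hmov
          rcases h6 a₁ hmov with h | h
          · exact hne h
          · exact head_not_mem_tail w hwp h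
        exact ⟨a₁, by rw [this, hzx]⟩
      · exact h5 (Q a) ⟨a, rfl⟩ hzx
    obtain ⟨c, hκc, hc⟩ := h3
    have hnb : ¬ κ b := by
      intro hb
      exact h2 ⟨b, hb, rfl⟩
    refine ⟨P', h1, hrange, b, c, hnb, hκc, ?_⟩
    rw [h4 c ⟨c, hκc, rfl⟩, hc]
end Moves
section Strategy
open Broadcast Classical SimpleGraph
open scoped Classical

variable {V : Type*} {G₀ : SimpleGraph V} {u : V} {m k : ℕ} [NeZero k]

/-- one marching step towards `u` along the attached path. -/
def march (u : V) {m : ℕ} : (V ⊕ Fin m) → (V ⊕ Fin m)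
  | Sum.inl v => Sum.inl v
  | Sum.inr i => if h : (i : ℕ) = 0 then Sum.inl u else Sum.inr ⟨(i : ℕ) - 1, by omega⟩

lemma march_iter_inl (t : ℕ) (v : V) :
    (march u (m := m))^[t] (Sum.inl v) = Sum.inl v := by
  induction t with
  | zero => rfl
  | succ t ih => rw [Function.iterate_succ_apply', ih]; rfl

lemma march_inr (i : Fin m) :
    march u (Sum.inr i) =
      if h : (i : ℕ) = 0 then Sum.inl u else Sum.inr ⟨(i : ℕ) - 1, by omega⟩ := rfl

lemma march_iter_inr (t : ℕ) (i : Fin m) :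
    (march u)^[t] (Sum.inr i) =
      if h : t ≤ (i : ℕ) then Sum.inr ⟨(i : ℕ) - t, by omega⟩ else Sum.inl u := by
  induction t with
  | zero =>
    rw [Function.iterate_zero_apply, dif_pos (Nat.zero_le _)]
    exact congrArg Sum.inr (Fin.ext (by simp))
  | succ t ih =>
    rw [Function.iterate_succ_apply', ih]
    by_cases h : t ≤ (i : ℕ)
    · rw [dif_pos h, march_inr]
      by_cases h0 : (i : ℕ) - t = 0
      · rw [dif_pos h0, dif_neg (show ¬ (t + 1 ≤ (i : ℕ)) by omega)]
      · rw [dif_neg h0, dif_pos (show t + 1 ≤ (i : ℕ) by omega)]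
        exact congrArg Sum.inr (Fin.ext (show (i : ℕ) - t - 1 = (i : ℕ) - (t + 1) by omega))
    · rw [dif_neg h, dif_neg (show ¬ (t + 1 ≤ (i : ℕ)) by omega)]
      rfl

/-- knowledge read off from a history list. -/
def KnowsL (d : Fin k → V ⊕ Fin m) (l : List (Fin k → V ⊕ Fin m)) : Fin k → Prop :=
  Knows (fun s => l.getD s d) 0 (l.length - 1)

lemma knows_congr {β : Type*} {pos pos' : ℕ → Fin k → β} :
    ∀ {t : ℕ}, (∀ s, s ≤ t → pos s = pos' s) →
      ∀ a, (Knows pos 0 t a ↔ Knows pos' 0 t a) := by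
  intro t
  induction t with
  | zero => intro _ a; exact Iff.rfl
  | succ t ih =>
    intro h a
    show (Knows pos 0 t a ∨ _) ↔ (Knows pos' 0 t a ∨ _)
    rw [ih (fun s hs => h s (hs.trans (Nat.le_succ t))) a]
    constructor
    · rintro (h1 | ⟨b, hb, he⟩)
      · exact Or.inl h1
      · exact Or.inr ⟨b, (ih (fun s hs => h s (hs.trans (Nat.le_succ t))) b).mp hb,
          by rw [← h (t+1) le_rfl]; exact he⟩
    · rintro (h1 | ⟨b, hb, he⟩)
      · exact Or.inl h1
      · exact Or.inr ⟨b, (ih (fun s hs => h s (hs.trans (Nat.le_succ t))) b).mpr hb,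
          by rw [h (t+1) le_rfl]; exact he⟩

lemma knowsL_hist (init : Fin k → V ⊕ Fin m) (pos : ℕ → Fin k → V ⊕ Fin m) (t : ℕ)
    (a : Fin k) : KnowsL init (hist pos t) a ↔ Knows pos 0 t a := by
  unfold KnowsL
  rw [hist_length]
  have : t + 1 - 1 = t := rfl
  rw [this]
  apply knows_congr
  intro s hs
  have hlt : s < (hist pos t).length := by rw [hist_length]; omega
  rw [List.getD_eq_getElem _ _ hlt]
  show (List.map pos (List.range (t+1)))[s] = pos s
  exact (List.getElem_map pos).trans (congrArg pos (List.getElem_range _))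

/-- the agents' full strategy. -/
noncomputable def sigma (strat : List (Fin k → V ⊕ Fin m) → SimpleGraph (V ⊕ Fin m))
    (init : Fin k → V ⊕ Fin m) (l : List (Fin k → V ⊕ Fin m)) : Fin k → V ⊕ Fin m :=
  if l.length - 1 < m then fun a => march u (l.getLastD init a)
  else if hinl : ∃ Q : Fin k → V, l.getLastD init = Sum.inl ∘ Q then
    if l.length - 1 < m + k then
      if hsh : ∃ Q', ShiftSpec (restrictG (strat l)) hinl.choose Q' then
        Sum.inl ∘ hsh.choose
      else l.getLastD init
    else
      if hk : ∃ Q', SpreadSpec (restrictG (strat l)) hinl.choose Q' (KnowsL init l) then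
        Sum.inl ∘ hk.choose
      else l.getLastD init
  else l.getLastD init

variable {strat : List (Fin k → V ⊕ Fin m) → SimpleGraph (V ⊕ Fin m)}
  {init : Fin k → V ⊕ Fin m}

lemma choose_eq_of_inl {P : Fin k → V ⊕ Fin m} (Q : Fin k → V)
    (hQ : P = Sum.inl ∘ Q) (hinl : ∃ Q' : Fin k → V, P = Sum.inl ∘ Q') :
    hinl.choose = Q := by
  funext a
  have h2 : Sum.inl ∘ Q = Sum.inl ∘ hinl.choose := hQ.symm.trans hinl.choose_spec
  exact (Sum.inl.inj (congrFun h2 a)).symm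

lemma sigma_phase1 {l : List (Fin k → V ⊕ Fin m)} (hl : l.length - 1 < m) :
    sigma (u := u) strat init l = fun a => march u (l.getLastD init a) := by
  unfold sigma; rw [if_pos hl]

lemma sigma_phase2 {l : List (Fin k → V ⊕ Fin m)} (hl : ¬ (l.length - 1 < m))
    (hl2 : l.length - 1 < m + k) (Q : Fin k → V) (hQ : l.getLastD init = Sum.inl ∘ Q) :
    (sigma (u := u) strat init l = l.getLastD init ∧
      ¬ ∃ Q', ShiftSpec (restrictG (strat l)) Q Q') ∨
    (∃ Q', ShiftSpec (restrictG (strat l)) Q Q' ∧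
      sigma (u := u) strat init l = Sum.inl ∘ Q') := by
  unfold sigma
  rw [if_neg hl, dif_pos ⟨Q, hQ⟩, if_pos hl2, choose_eq_of_inl Q hQ ⟨Q, hQ⟩]
  by_cases hsh : ∃ Q', ShiftSpec (restrictG (strat l)) Q Q'
  · rw [dif_pos hsh]; exact Or.inr ⟨hsh.choose, hsh.choose_spec, rfl⟩
  · rw [dif_neg hsh]; exact Or.inl ⟨rfl, hsh⟩

lemma sigma_phase3 {l : List (Fin k → V ⊕ Fin m)} (hl : ¬ (l.length - 1 < m))
    (hl2 : ¬ (l.length - 1 < m + k)) (Q : Fin k → V)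
    (hQ : l.getLastD init = Sum.inl ∘ Q) :
    (sigma (u := u) strat init l = l.getLastD init ∧
      ¬ ∃ Q', SpreadSpec (restrictG (strat l)) Q Q' (KnowsL init l)) ∨
    (∃ Q', SpreadSpec (restrictG (strat l)) Q Q' (KnowsL init l) ∧
      sigma (u := u) strat init l = Sum.inl ∘ Q') := by
  unfold sigma
  rw [if_neg hl, dif_pos ⟨Q, hQ⟩, if_neg hl2, choose_eq_of_inl Q hQ ⟨Q, hQ⟩]
  by_cases hk : ∃ Q', SpreadSpec (restrictG (strat l)) Q Q' (KnowsL init l)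
  · rw [dif_pos hk]; exact Or.inr ⟨hk.choose, hk.choose_spec, rfl⟩
  · rw [dif_neg hk]; exact Or.inl ⟨rfl, hk⟩

lemma sigma_legal (hstrat : ∀ h, ValidSub (attachPath G₀ u m) (strat h)) :
    ∀ l a, Step (strat l) ((l.getLastD init) a) (sigma (u := u) strat init l a) := by
  intro l a
  unfold sigma
  by_cases h1 : l.length - 1 < m
  · rw [if_pos h1]
    rcases hP : l.getLastD init a with v | i
    · exact Or.inl rfl
    · rw [march_inr]
      by_cases h0 : (i : ℕ) = 0
      · rw [dif_pos h0]
        exact Or.inr (bridge0 (hstrat l) i h0).symm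
      · rw [dif_neg h0]
        refine Or.inr (bridgeStep (hstrat l) i ⟨(i : ℕ) - 1, by omega⟩ ?_)
        show (i : ℕ) - 1 + 1 = (i : ℕ)
        omega
  · rw [if_neg h1]
    by_cases hinl : ∃ Q : Fin k → V, l.getLastD init = Sum.inl ∘ Q
    · rw [dif_pos hinl]
      have hQ := hinl.choose_spec
      by_cases h2 : l.length - 1 < m + k
      · rw [if_pos h2]
        by_cases hsh : ∃ Q', ShiftSpec (restrictG (strat l)) hinl.choose Q'
        · rw [dif_pos hsh]
          rw [show l.getLastD init a = Sum.inl (hinl.choose a) from congrFun hQ a]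
          rcases hsh.choose_spec.1 a with h | h
          · exact Or.inl (by show Sum.inl _ = Sum.inl _; rw [h])
          · exact Or.inr h
        · rw [dif_neg hsh]; exact Or.inl rfl
      · rw [if_neg h2]
        by_cases hk : ∃ Q', SpreadSpec (restrictG (strat l)) hinl.choose Q' (KnowsL init l)
        · rw [dif_pos hk]
          rw [show l.getLastD init a = Sum.inl (hinl.choose a) from congrFun hQ a]
          rcases hk.choose_spec.1 a with h | h
          · exact Or.inl (by show Sum.inl _ = Sum.inl _; rw [h])
          · exact Or.inr h
        · rw [dif_neg hk]; exact Or.inl rfl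
    · rw [dif_neg hinl]; exact Or.inl rfl

end Strategy
section Run
open Broadcast Classical SimpleGraph
open scoped Classical

variable {V : Type*} {G₀ : SimpleGraph V} {m k : ℕ} [NeZero k]

variable (u : V) (strat : List (Fin k → V ⊕ Fin m) → SimpleGraph (V ⊕ Fin m))
  (init : Fin k → V ⊕ Fin m)

/-- the run the agents produce. -/
noncomputable def thePos : ℕ → Fin k → V ⊕ Fin m := runP init (sigma (u := u) strat init)

/-- its projection to `V`. -/
noncomputable def theQ (t : ℕ) : Fin k → V :=
  fun a => Sum.elim id (fun _ => u) (thePos u strat init t a)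

variable {u strat init}

lemma thePos_zero : thePos u strat init 0 = init := rfl

lemma thePos_succ (t : ℕ) :
    thePos u strat init (t+1) = sigma (u := u) strat init (hist (thePos u strat init) t) :=
  runP_succ _ _ _

lemma thePos_consistent {G₀ : SimpleGraph V}
    (hstrat : ∀ h, ValidSub (attachPath G₀ u m) (strat h)) :
    Consistent strat (thePos u strat init) :=
  runP_consistent strat init _ (sigma_legal hstrat)

lemma hist_len_sub (t : ℕ) : (hist (thePos u strat init) t).length - 1 = t := by
  rw [hist_length]
  omega

lemma hist_last (t : ℕ) :
    (hist (thePos u strat init) t).getLastD init = thePos u strat init t :=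
  hist_getLastD _ _ _

lemma thePos_phase1 (t : ℕ) (ht : t ≤ m) :
    thePos u strat init t = fun a => (march u)^[t] (init a) := by
  induction t with
  | zero => rfl
  | succ t ih =>
    have ht' : t ≤ m := le_of_lt (Nat.lt_of_succ_le ht)
    rw [thePos_succ, sigma_phase1 (by rw [hist_len_sub]; omega), hist_last, ih ht']
    funext a
    rw [Function.iterate_succ_apply']

lemma thePos_inl (t : ℕ) (ht : m ≤ t) :
    thePos u strat init t = Sum.inl ∘ theQ u strat init t := by
  have key : ∀ s, m ≤ s → ∀ a, ∃ w, thePos u strat init s a = Sum.inl w := by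
    intro s hs
    induction s, hs using Nat.le_induction with
    | base =>
      intro a
      have hP := congrFun (thePos_phase1 (u := u) (strat := strat) (init := init) m le_rfl) a
      rcases hi : init a with v | i
      · exact ⟨v, by rw [hP, hi, march_iter_inl]⟩
      · refine ⟨u, ?_⟩
        rw [hP, hi, march_iter_inr]
        have : ¬ (m ≤ (i : ℕ)) := by omega
        rw [dif_neg this]
    | succ t ht ih =>
      have hQ : thePos u strat init t = Sum.inl ∘ theQ u strat init t := by
        funext a
        obtain ⟨w, hw⟩ := ih a
        show _ = Sum.inl (Sum.elim _ _ (thePos u strat init t a))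
        rw [hw]
        rfl
      intro a
      rw [thePos_succ]
      by_cases h2 : t < m + k
      · rcases sigma_phase2 (u := u) (strat := strat) (init := init)
            (l := hist (thePos u strat init) t)
            (by rw [hist_len_sub]; omega) (by rw [hist_len_sub]; omega)
            (theQ u strat init t) (by rw [hist_last]; exact hQ) with ⟨he, _⟩ | ⟨Q', _, he⟩
        · rw [he, hist_last]
          obtain ⟨w, hw⟩ := ih a
          exact ⟨w, hw⟩
        · exact ⟨Q' a, by rw [he]; rfl⟩
      · rcases sigma_phase3 (u := u) (strat := strat) (init := init)
            (l := hist (thePos u strat init) t)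
            (by rw [hist_len_sub]; omega) (by rw [hist_len_sub]; omega)
            (theQ u strat init t) (by rw [hist_last]; exact hQ) with ⟨he, _⟩ | ⟨Q', _, he⟩
        · rw [he, hist_last]
          obtain ⟨w, hw⟩ := ih a
          exact ⟨w, hw⟩
        · exact ⟨Q' a, by rw [he]; rfl⟩
  funext a
  obtain ⟨w, hw⟩ := key t ht a
  show _ = Sum.inl (Sum.elim _ _ (thePos u strat init t a))
  rw [hw]
  rfl

lemma theQ_stay {t : ℕ} (h : thePos u strat init (t+1) = thePos u strat init t) :
    theQ u strat init (t+1) = theQ u strat init t := by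
  unfold theQ
  rw [h]

lemma theQ_of_inl {t : ℕ} {Q' : Fin k → V}
    (h : thePos u strat init t = Sum.inl ∘ Q') : theQ u strat init t = Q' := by
  funext a
  show Sum.elim id (fun _ => u) (thePos u strat init t a) = _
  rw [h]
  rfl

/-- dichotomy for a phase-2 round. -/
lemma round2 (t : ℕ) (ht : m ≤ t) (ht2 : t < m + k) :
    (thePos u strat init (t+1) = thePos u strat init t ∧
      ¬ ∃ Q', ShiftSpec (restrictG (strat (hist (thePos u strat init) t)))
        (theQ u strat init t) Q') ∨
    (∃ Q', ShiftSpec (restrictG (strat (hist (thePos u strat init) t)))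
        (theQ u strat init t) Q' ∧ thePos u strat init (t+1) = Sum.inl ∘ Q') := by
  have := sigma_phase2 (u := u) (strat := strat) (init := init)
      (l := hist (thePos u strat init) t)
      (by rw [hist_len_sub]; omega) (by rw [hist_len_sub]; omega)
      (theQ u strat init t) (by rw [hist_last]; exact thePos_inl t ht)
  rw [hist_last] at this
  rcases this with ⟨he, hn⟩ | ⟨Q', hs, he⟩
  · exact Or.inl ⟨by rw [thePos_succ, he], hn⟩
  · exact Or.inr ⟨Q', hs, by rw [thePos_succ, he]⟩

/-- dichotomy for a phase-3 round. -/
lemma round3 (t : ℕ) (ht2 : m + k ≤ t) :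
    (thePos u strat init (t+1) = thePos u strat init t ∧
      ¬ ∃ Q', SpreadSpec (restrictG (strat (hist (thePos u strat init) t)))
        (theQ u strat init t) Q' (KnowsL init (hist (thePos u strat init) t))) ∨
    (∃ Q', SpreadSpec (restrictG (strat (hist (thePos u strat init) t)))
        (theQ u strat init t) Q' (KnowsL init (hist (thePos u strat init) t)) ∧
      thePos u strat init (t+1) = Sum.inl ∘ Q') := by
  have := sigma_phase3 (u := u) (strat := strat) (init := init)
      (l := hist (thePos u strat init) t)
      (by rw [hist_len_sub]; omega) (by rw [hist_len_sub]; omega)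
      (theQ u strat init t) (by rw [hist_last]; exact thePos_inl t (by omega))
  rw [hist_last] at this
  rcases this with ⟨he, hn⟩ | ⟨Q', hs, he⟩
  · exact Or.inl ⟨by rw [thePos_succ, he], hn⟩
  · exact Or.inr ⟨Q', hs, by rw [thePos_succ, he]⟩

/-- "done" configurations of phase 2. -/
def DoneQ (Q : Fin k → V) : Prop := Function.Injective Q ∨ Function.Surjective Q

lemma done_noShift {H : SimpleGraph V} {Q : Fin k → V} (hd : DoneQ Q) :
    ¬ ∃ Q', ShiftSpec H Q Q' := by
  rintro ⟨Q', _, hsub, hns⟩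
  rcases hd with hinj | hsurj
  · apply hns
    have h1 : Finset.univ.image Q ⊆ Finset.univ.image Q' := by
      intro v hv
      rw [Finset.mem_image] at hv ⊢
      obtain ⟨a, _, ha⟩ := hv
      obtain ⟨b, hb⟩ := hsub ⟨a, ha⟩
      exact ⟨b, Finset.mem_univ b, hb⟩
    have h2 : (Finset.univ.image Q').card ≤ (Finset.univ.image Q).card := by
      rw [Finset.card_image_of_injective _ hinj]
      exact (Finset.card_image_le).trans (by rw [Finset.card_univ, Fintype.card_fin])
    have h3 : Finset.univ.image Q = Finset.univ.image Q' :=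
      Finset.eq_of_subset_of_card_le h1 h2
    rintro v ⟨b, rfl⟩
    have : Q' b ∈ Finset.univ.image Q := by
      rw [h3, Finset.mem_image]
      exact ⟨b, Finset.mem_univ b, rfl⟩
    rw [Finset.mem_image] at this
    obtain ⟨a, _, ha⟩ := this
    exact ⟨a, ha⟩
  · apply hns
    rintro v ⟨b, rfl⟩
    exact hsurj (Q' b)

lemma notDone_shift {H : SimpleGraph V} (hconn : H.Connected) {Q : Fin k → V}
    (hd : ¬ DoneQ Q) : ∃ Q', ShiftSpec H Q Q' := by
  rw [DoneQ, not_or] at hd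
  obtain ⟨hni, hns⟩ := hd
  rw [Function.not_injective_iff] at hni
  obtain ⟨a₁, a₂, heq, hne⟩ := hni
  rw [Function.Surjective] at hns
  push_neg at hns
  obtain ⟨v, hv⟩ := hns
  exact floodEx hconn Q a₁ a₂ hne heq v (by rintro ⟨a, ha⟩; exact hv a ha)

lemma theQ_done (hV : Nonempty V)
    (hstrat : ∀ h, ValidSub (attachPath G₀ u m) (strat h)) :
    DoneQ (theQ u strat init (m + k)) := by
  -- first, some time ≤ m+k is done
  have hex : ∃ t, m ≤ t ∧ t ≤ m + k ∧ DoneQ (theQ u strat init t) := by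
    by_contra hno
    push_neg at hno
    have hgrow : ∀ j, j ≤ k →
        j + 1 ≤ (Finset.univ.image (theQ u strat init (m + j))).card := by
      intro j
      induction j with
      | zero =>
        intro _
        have hne : (Finset.univ.image (theQ u strat init (m + 0))).Nonempty :=
          ⟨theQ u strat init (m + 0) 0, Finset.mem_image.mpr ⟨0, Finset.mem_univ _, rfl⟩⟩
        have := Finset.card_pos.mpr hne
        omega
      | succ j ih =>
        intro hj
        have hj' : j ≤ k := by omega
        have hnd := hno (m + j) (by omega) (by omega)
        have hconn : (restrictG (strat (hist (thePos u strat init) (m + j)))).Connected :=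
          restrictG_connected hV (hstrat _)
        rcases round2 (u := u) (strat := strat) (init := init) (m + j) (by omega) (by omega) with ⟨_, hns⟩ | ⟨Q', hs, he⟩
        · exact absurd (notDone_shift hconn hnd) hns
        · have hQ' : theQ u strat init (m + (j+1)) = Q' := by
            have : m + (j + 1) = (m + j) + 1 := by omega
            rw [this]
            exact theQ_of_inl he
          rw [hQ']
          have hih := ih hj'
          have hsub : Finset.univ.image (theQ u strat init (m + j)) ⊂ Finset.univ.image Q' := by
            constructor
            · intro v hv
              rw [Finset.mem_image] at hv ⊢
              obtain ⟨a, _, ha⟩ := hv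
              obtain ⟨b, hb⟩ := hs.2.1 ⟨a, ha⟩
              exact ⟨b, Finset.mem_univ b, hb⟩
            · intro hcon
              apply hs.2.2
              rintro v ⟨b, rfl⟩
              have : Q' b ∈ Finset.univ.image (theQ u strat init (m + j)) :=
                hcon (Finset.mem_image.mpr ⟨b, Finset.mem_univ b, rfl⟩)
              rw [Finset.mem_image] at this
              obtain ⟨a, _, ha⟩ := this
              exact ⟨a, ha⟩
          have := Finset.card_lt_card hsub
          omega
    have := hgrow k le_rfl
    have hle : (Finset.univ.image (theQ u strat init (m + k))).card ≤ k :=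
      (Finset.card_image_le).trans (by rw [Finset.card_univ, Fintype.card_fin])
    omega
  obtain ⟨t₀, ht₀m, ht₀k, hdone⟩ := hex
  -- done persists up to m + k
  have hpersist : ∀ t, t₀ ≤ t → t ≤ m + k → theQ u strat init t = theQ u strat init t₀ := by
    intro t ht
    induction t, ht using Nat.le_induction with
    | base => intro _; rfl
    | succ t ht ih =>
      intro htk
      have ih' := ih (by omega)
      rcases round2 (u := u) (strat := strat) (init := init) t (by omega) (by omega) with ⟨he, _⟩ | ⟨Q', hs, _⟩
      · exact (theQ_stay he).trans ih'
      · exfalso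
        refine done_noShift ?_ ⟨Q', hs⟩
        rw [ih']
        exact hdone
  rw [hpersist (m + k) ht₀k le_rfl]
  exact hdone

end Run
section CaseB
open Broadcast Classical SimpleGraph
open scoped Classical

variable {V : Type*} {G₀ : SimpleGraph V} {m k : ℕ} [NeZero k]
variable {u : V} {strat : List (Fin k → V ⊕ Fin m) → SimpleGraph (V ⊕ Fin m)}
  {init : Fin k → V ⊕ Fin m}

lemma caseB (hV : Nonempty V) [Fintype V] (hcard : Fintype.card V < k)
    (hstrat : ∀ h, ValidSub (attachPath G₀ u m) (strat h)) :
    ∃ T, ∀ a, Knows (thePos u strat init) 0 T a := by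
  set pos := thePos u strat init with hpos
  have hsurj1 : Function.Surjective (theQ u strat init (m + k)) := by
    rcases theQ_done hV hstrat (G₀ := G₀) (init := init) with hinj | hsurj
    · exfalso
      have := Fintype.card_le_of_injective _ hinj
      rw [Fintype.card_fin] at this
      omega
    · exact hsurj
  have hsurjAll : ∀ t, m + k ≤ t → Function.Surjective (theQ u strat init t) := by
    intro t ht
    induction t, ht using Nat.le_induction with
    | base => exact hsurj1
    | succ t ht ih =>
      rcases round3 (u := u) (strat := strat) (init := init) t ht with ⟨he, _⟩ | ⟨Q', hs, he⟩
      · rw [theQ_stay he]; exact ih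
      · rw [theQ_of_inl he]
        intro v
        obtain ⟨a, ha⟩ := ih v
        obtain ⟨b, hb⟩ := hs.2.1 ⟨a, ha⟩
        exact ⟨b, hb⟩
  have hprog : ∀ t, m + k ≤ t → (∃ a, ¬ Knows pos 0 t a) →
      ∃ b, ¬ Knows pos 0 t b ∧ Knows pos 0 (t+1) b := by
    intro t ht hex0
    obtain ⟨a₀, ha₀⟩ := hex0
    have hinlt : pos t = Sum.inl ∘ theQ u strat init t := thePos_inl t (by omega)
    have hκ : ∀ x, KnowsL init (hist pos t) x ↔ Knows pos 0 t x := fun x =>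
      knowsL_hist init pos t x
    rcases round3 (u := u) (strat := strat) (init := init) t ht with ⟨he, hns⟩ | ⟨Q', hs, he⟩
    · exfalso
      apply hns
      have hconn : (restrictG (strat (hist pos t))).Connected :=
        restrictG_connected hV (hstrat _)
      obtain ⟨a₁, a₂, hne12, heq12⟩ := Fintype.exists_ne_map_eq_of_card_lt
        (theQ u strat init t) (by rw [Fintype.card_fin]; omega)
      have hhom : ∀ a b, theQ u strat init t a = theQ u strat init t b →
          KnowsL init (hist pos t) b → KnowsL init (hist pos t) a := by
        intro a b hab hb
        obtain ⟨s, rfl⟩ : ∃ s, t = s + 1 := ⟨t - 1, by omega⟩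
        refine (hκ a).mpr (knows_homog ?_ ((hκ b).mp hb))
        rw [show pos (s+1) a = Sum.inl (theQ u strat init (s+1) a) from congrFun hinlt a,
          show pos (s+1) b = Sum.inl (theQ u strat init (s+1) b) from congrFun hinlt b, hab]
      exact spreadEx hconn (theQ u strat init t) (hsurjAll t ht)
        (KnowsL init (hist pos t)) hhom 0 ((hκ 0).mpr (knows_zero _)) a₀
        (fun h => ha₀ ((hκ a₀).mp h)) a₁ a₂ hne12 heq12
    · rw [← hpos] at he
      obtain ⟨_, _, b, c, hnb, hc, hbc⟩ := hs
      refine ⟨b, fun h => hnb ((hκ b).mpr h), Or.inr ⟨c, (hκ c).mp hc, ?_⟩⟩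
      rw [congrFun he b, congrFun he c]
      show Sum.inl (Q' b) = Sum.inl (Q' c)
      rw [hbc]
  refine ⟨m + k + k, ?_⟩
  by_contra hcon
  push_neg at hcon
  obtain ⟨a₀, ha₀⟩ := hcon
  have hstep : ∀ j, j ≤ k →
      j + 1 ≤ (Finset.univ.filter (fun a => Knows pos 0 (m + k + j) a)).card := by
    intro j
    induction j with
    | zero =>
      intro _
      have h0 : (0 : Fin k) ∈ Finset.univ.filter (fun a => Knows pos 0 (m + k + 0) a) :=
        Finset.mem_filter.mpr ⟨Finset.mem_univ _, knows_zero _⟩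
      have := Finset.card_pos.mpr ⟨0, h0⟩
      omega
    | succ j ih =>
      intro hj
      have hih := ih (by omega)
      have hex : ∃ a, ¬ Knows pos 0 (m + k + j) a := by
        by_contra hall
        push_neg at hall
        exact ha₀ (knows_le (by omega) (hall a₀))
      obtain ⟨b, hnb, hb⟩ := hprog (m + k + j) (by omega) hex
      have hsub : Finset.univ.filter (fun a => Knows pos 0 (m + k + j) a) ⊂
          Finset.univ.filter (fun a => Knows pos 0 (m + k + (j+1)) a) := by
        constructor
        · intro x hx
          rw [Finset.mem_filter] at hx ⊢
          refine ⟨hx.1, ?_⟩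
          have heq : m + k + (j + 1) = (m + k + j) + 1 := by omega
          rw [heq]
          exact knows_mono hx.2
        · intro hsub2
          have hbmem : b ∈ Finset.univ.filter (fun a => Knows pos 0 (m + k + (j+1)) a) := by
            rw [Finset.mem_filter]
            refine ⟨Finset.mem_univ _, ?_⟩
            have heq : m + k + (j + 1) = (m + k + j) + 1 := by omega
            rw [heq]
            exact hb
          have := hsub2 hbmem
          rw [Finset.mem_filter] at this
          exact hnb this.2
      have := Finset.card_lt_card hsub
      omega
  have hk := hstep k le_rfl
  have hle : (Finset.univ.filter (fun a => Knows pos 0 (m + k + k) a)).card ≤ k := by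
    refine (Finset.card_filter_le _ _).trans ?_
    rw [Finset.card_univ, Fintype.card_fin]
  have hcontra := hk.trans hle
  omega

end CaseB
section CaseA
open Broadcast Classical SimpleGraph
open scoped Classical

variable {V : Type*} {G₀ : SimpleGraph V} {m k : ℕ} [NeZero k]
variable {u : V} {strat : List (Fin k → V ⊕ Fin m) → SimpleGraph (V ⊕ Fin m)}
  {init : Fin k → V ⊕ Fin m}

lemma hist_congr {α : Type*} {p q : ℕ → Fin k → α} {t : ℕ}
    (h : ∀ s, s ≤ t → p s = q s) : hist p t = hist q t := by
  unfold hist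
  apply List.map_congr_left
  intro x hx
  rw [List.mem_range] at hx
  exact h x (by omega)

lemma caseA (hG₀ : G₀.Connected) (hwin : AgentsWin G₀ k)
    (hg : ∃ g : Fin k → V, Function.Injective g)
    (hstrat : ∀ h, ValidSub (attachPath G₀ u m) (strat h)) :
    ∃ pos : ℕ → Fin k → V ⊕ Fin m, pos 0 = init ∧ Consistent strat pos ∧
      ∃ T, ∀ a, Knows pos 0 T a := by
  classical
  set t₁ := m + k with ht₁
  set pos0 := thePos u strat init with hpos0
  set Q₁ := theQ u strat init t₁ with hQ₁
  have hinlt1 : pos0 t₁ = Sum.inl ∘ Q₁ := thePos_inl t₁ (by omega)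
  -- Q₁ is injective
  have hQinj : Function.Injective Q₁ := by
    rcases theQ_done hG₀.nonempty hstrat (G₀ := G₀) (init := init) with hinj | hsurj
    · exact hinj
    · obtain ⟨g, hginj⟩ := hg
      have hfin : Finite V := Finite.of_surjective _ hsurj
      have : Fintype V := Fintype.ofFinite V
      have h2 : k ≤ Fintype.card V := by
        have := Fintype.card_le_of_injective _ hginj
        rwa [Fintype.card_fin] at this
      have h1 : Fintype.card V ≤ k := by
        have := Fintype.card_le_of_surjective _ hsurj
        rwa [Fintype.card_fin] at this
      exact ((Fintype.bijective_iff_surjective_and_card Q₁).mpr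
        ⟨hsurj, by rw [Fintype.card_fin]; omega⟩).injective
  -- simulated adversary on G₀
  set pre : List (Fin k → V ⊕ Fin m) := hist pos0 t₁ with hpre
  set strat₀ : List (Fin k → V) → SimpleGraph V :=
    fun l => restrictG (strat (pre ++ (l.drop 1).map (fun f => Sum.inl ∘ f))) with hstrat₀
  have hvalid₀ : ∀ l, ValidSub G₀ (strat₀ l) := fun l =>
    ⟨restrictG_le (hstrat _), restrictG_connected hG₀.nonempty (hstrat _)⟩
  obtain ⟨pos₁, hpos₁0, hcons₁, T₀, hT₀⟩ := hwin Q₁ strat₀ hQinj hvalid₀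
  -- glue the two runs
  set posF : ℕ → Fin k → V ⊕ Fin m :=
    fun t => if t < t₁ then pos0 t else Sum.inl ∘ pos₁ (t - t₁) with hposF
  have factS : ∀ s, posF (t₁ + s) = Sum.inl ∘ pos₁ s := by
    intro s
    show (if t₁ + s < t₁ then _ else _) = _
    rw [if_neg (by omega), Nat.add_sub_cancel_left]
  have fact0 : ∀ t, t ≤ t₁ → posF t = pos0 t := by
    intro t ht
    rcases Nat.lt_or_ge t t₁ with h | h
    · show (if t < t₁ then _ else _) = _
      rw [if_pos h]
    · have heq : t = t₁ := by omega
      subst heq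
      have h0 := factS 0
      rw [Nat.add_zero] at h0
      rw [h0, hpos₁0, hinlt1]
  have histEq : ∀ s, hist posF (t₁ + s) =
      pre ++ ((hist pos₁ s).drop 1).map (fun f => Sum.inl ∘ f) := by
    intro s
    induction s with
    | zero =>
      rw [Nat.add_zero]
      have h1 : hist posF t₁ = hist pos0 t₁ := hist_congr (fun s hs => fact0 s hs)
      rw [h1, hist_zero]
      simp [hpre]
    | succ s ih =>
      rw [Nat.add_succ, hist_succ, ih, hist_succ]
      have hd : ((hist pos₁ s ++ [pos₁ (s+1)]).drop 1) =
          (hist pos₁ s).drop 1 ++ [pos₁ (s+1)] := by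
        apply List.drop_append_of_le_length
        rw [hist_length]
        omega
      rw [hd, List.map_append, List.map_singleton, ← List.append_assoc]
      congr 1
      have hf := factS (s+1)
      rw [Nat.add_succ] at hf
      rw [hf]
  -- consistency of the glued run
  have hconsF : Consistent strat posF := by
    intro t a
    rcases Nat.lt_or_ge t t₁ with h | h
    · have e1 : posF t = pos0 t := fact0 t (by omega)
      have e2 : posF (t+1) = pos0 (t+1) := fact0 (t+1) (by omega)
      have e3 : hist posF t = hist pos0 t := hist_congr (fun s hs => fact0 s (by omega))
      rw [e1, e2, e3]
      exact thePos_consistent hstrat t a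
    · obtain ⟨s, rfl⟩ : ∃ s, t = t₁ + s := ⟨t - t₁, by omega⟩
      have e1 := factS s
      have e2 : posF (t₁ + s + 1) = Sum.inl ∘ pos₁ (s+1) := by
        have hf := factS (s+1)
        rwa [Nat.add_succ] at hf
      rw [e1, e2, histEq s]
      have := hcons₁ s a
      exact step_lift rfl this
  -- knowledge transfer
  have ktrans : ∀ s a, Knows pos₁ 0 s a → Knows posF 0 (t₁ + s) a := by
    intro s
    induction s with
    | zero =>
      intro a ha
      have : a = 0 := ha
      subst this
      exact knows_zero _
    | succ s ih =>
      intro a ha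
      rw [Nat.add_succ]
      rcases ha with ha | ⟨b, hb, he⟩
      · exact knows_mono (ih a ha)
      · refine Or.inr ⟨b, ih b hb, ?_⟩
        have e2 : posF (t₁ + s + 1) = Sum.inl ∘ pos₁ (s+1) := by
          have hf := factS (s+1)
          rwa [Nat.add_succ] at hf
        rw [e2]
        show Sum.inl (pos₁ (s+1) a) = Sum.inl (pos₁ (s+1) b)
        rw [he]
  refine ⟨posF, ?_, hconsF, t₁ + T₀, fun a => ktrans T₀ a (hT₀ a)⟩
  rw [fact0 0 (by omega)]
  rfl

end CaseA

/-- If `G` is obtained from a connected graph `G₀` by attaching a path at a vertex `u`,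
and `BROADCAST(G₀, k)` is an Agents win, then `BROADCAST(G, k)` is an Agents win. -/
theorem agentsWin_attachPath {V : Type*} {G₀ : SimpleGraph V} (hG₀ : G₀.Connected)
    (u : V) (m : ℕ) (k : ℕ) [NeZero k] (hwin : AgentsWin G₀ k) :
    AgentsWin (attachPath G₀ u m) k := by
  classical
  intro init strat hinj hstrat
  by_cases hg : ∃ g : Fin k → V, Function.Injective g
  · exact caseA hG₀ hwin hg hstrat
  · have hfin : Finite V := by
      by_contra hinf
      rw [not_finite_iff_infinite] at hinf
      refine hg ⟨fun i => Infinite.natEmbedding V i.val, ?_⟩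
      intro a b hab
      exact Fin.val_injective ((Infinite.natEmbedding V).injective hab)
    have hft : Fintype V := Fintype.ofFinite V
    have hcard : Fintype.card V < k := by
      by_contra hle
      push_neg at hle
      obtain ⟨e⟩ := Function.Embedding.nonempty_iff_card_le.mpr
        (by rw [Fintype.card_fin]; exact hle : Fintype.card (Fin k) ≤ Fintype.card V)
      exact hg ⟨e, e.injective⟩
    exact ⟨thePos u strat init, rfl, thePos_consistent hstrat,
      caseB hG₀.nonempty hcard hstrat⟩
end
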